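/- For every positive integer d₁, Σ_{d₂=1}^{∞} c_{d₂}·gcd(d₁,d₂)/d₂² = O(1 + log d₁), where c_ℓ = Σ_{d=1}^{∞} gcd(d,ℓ)/d². -/

import Mathlib

open ENNReal Finset

/-- `c_ℓ = ∑_{d=1}^{∞} gcd(d,ℓ)/d²`. -/
noncomputable def cc (l : ℕ) : ℝ := ∑' d : ℕ, (Nat.gcd (d + 1) l : ℝ) / ((d + 1 : ℕ) ^ 2)

namespace CCAux

/-- divisor sum of reciprocals in `ℝ≥0∞` -/
noncomputable def sg (n : ℕ) : ℝ≥0∞ := ∑ e ∈ n.divisors, ((e : ℝ≥0∞))⁻¹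

noncomputable def z : ℝ≥0∞ := ∑' k : ℕ, (((k + 1 : ℕ)) : ℝ≥0∞)⁻¹ ^ 2

lemma summable_sq : Summable (fun k : ℕ => 1 / ((k + 1 : ℕ) : ℝ) ^ 2) := by
  have h := (Real.summable_one_div_nat_pow (p := 2)).mpr (by norm_num)
  exact (summable_nat_add_iff (f := fun n : ℕ => 1 / (n : ℝ) ^ 2) 1).mpr h

lemma ofReal_inv_nat_sq (n : ℕ) (hn : n ≠ 0) :
    ENNReal.ofReal (1 / ((n : ℝ)) ^ 2) = ((n : ℝ≥0∞))⁻¹ ^ 2 := by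
  have h0 : (0:ℝ) < (n:ℝ) := by exact_mod_cast Nat.pos_of_ne_zero hn
  rw [one_div, ← inv_pow, ENNReal.ofReal_pow (by positivity),
    ENNReal.ofReal_inv_of_pos h0, ENNReal.ofReal_natCast]

lemma z_eq : z = ENNReal.ofReal (∑' k : ℕ, 1 / ((k + 1 : ℕ) : ℝ) ^ 2) := by
  rw [ENNReal.ofReal_tsum_of_nonneg (fun n => by positivity) summable_sq]
  exact tsum_congr fun k => (ofReal_inv_nat_sq (k + 1) (Nat.succ_ne_zero k)).symm

lemma z_ne_top : z ≠ ⊤ := by rw [z_eq]; exact ENNReal.ofReal_ne_top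

lemma tsum_if_dvd (e : ℕ) (he : e ≠ 0) (F : ℕ → ℝ≥0∞) :
    ∑' d : ℕ, (if e ∣ d + 1 then F (d + 1) else 0) = ∑' m : ℕ, F (e * (m + 1)) := by
  set i : ℕ → ℕ := fun m => e * (m + 1) - 1 with hi_def
  have hpos : ∀ m : ℕ, 1 ≤ e * (m + 1) := fun m =>
    Nat.one_le_iff_ne_zero.mpr (Nat.mul_ne_zero he (Nat.succ_ne_zero m))
  have hi : Function.Injective i := by
    intro a b hab
    have ha := hpos a; have hb := hpos b
    have : e * (a + 1) = e * (b + 1) := by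
      simp only [hi_def] at hab; omega
    have := Nat.eq_of_mul_eq_mul_left (Nat.pos_of_ne_zero he) this
    omega
  have hsupp : Function.support (fun d => if e ∣ d + 1 then F (d + 1) else 0) ⊆ Set.range i := by
    intro d hd
    by_cases h : e ∣ d + 1
    · obtain ⟨c, hc⟩ := h
      have hc0 : c ≠ 0 := by rintro rfl; omega
      refine ⟨c - 1, ?_⟩
      have hc1 : c - 1 + 1 = c := by omega
      simp only [hi_def, hc1]
      omega
    · simp [h] at hd
  have key := hi.tsum_eq (f := fun d => if e ∣ d + 1 then F (d + 1) else 0) hsupp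
  rw [← key]
  refine tsum_congr fun m => ?_
  have h1 : i m + 1 = e * (m + 1) := by have := hpos m; simp only [hi_def]; omega
  simp only [h1, if_pos (dvd_mul_right e (m + 1))]

lemma divisors_subset_Icc (n : ℕ) : n.divisors ⊆ Finset.Icc 1 n := by
  intro f hf
  rw [Nat.mem_divisors] at hf
  have hn : n ≠ 0 := hf.2
  have hf0 : f ≠ 0 := by rintro rfl; exact hn (zero_dvd_iff.mp hf.1)
  rw [Finset.mem_Icc]
  exact ⟨Nat.pos_of_ne_zero hf0, Nat.le_of_dvd (Nat.pos_of_ne_zero hn) hf.1⟩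

lemma sum_Icc_le_tsum (G : ℕ → ℝ≥0∞) (n : ℕ) :
    ∑ f ∈ Finset.Icc 1 n, G f ≤ ∑' k : ℕ, G (k + 1) := by
  have himg : Finset.Icc 1 n = (Finset.range n).image (· + 1) := by
    ext x
    simp only [Finset.mem_Icc, Finset.mem_image, Finset.mem_range]
    constructor
    · intro h; exact ⟨x - 1, by omega, by omega⟩
    · rintro ⟨k, hk, rfl⟩; omega
  rw [himg, Finset.sum_image (by intro a _ b _ h; simp only at h; omega)]
  exact ENNReal.sum_le_tsum _

lemma div_inv_sq_le_z (n : ℕ) : (∑ f ∈ n.divisors, ((f : ℝ≥0∞))⁻¹ ^ 2) ≤ z :=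
  (Finset.sum_le_sum_of_subset (divisors_subset_Icc n)).trans
    (sum_Icc_le_tsum (fun f => ((f : ℝ≥0∞))⁻¹ ^ 2) n)

lemma Icc_inv_le (n : ℕ) :
    ∑ g ∈ Finset.Icc 1 n, ((g : ℝ≥0∞))⁻¹ ≤ ENNReal.ofReal (1 + Real.log n) := by
  have heq : ∑ g ∈ Finset.Icc 1 n, ((g : ℝ≥0∞))⁻¹
      = ENNReal.ofReal (∑ g ∈ Finset.Icc 1 n, ((g : ℝ))⁻¹) := by
    rw [ENNReal.ofReal_sum_of_nonneg (fun i _ => by positivity)]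
    refine Finset.sum_congr rfl fun g hg => ?_
    have hg0 : (0:ℝ) < (g:ℝ) := by
      rw [Finset.mem_Icc] at hg; exact_mod_cast hg.1
    rw [ENNReal.ofReal_inv_of_pos hg0, ENNReal.ofReal_natCast]
  rw [heq]
  apply ENNReal.ofReal_le_ofReal
  have hh : ∑ g ∈ Finset.Icc 1 n, ((g : ℝ))⁻¹ = ((harmonic n : ℚ) : ℝ) := by
    rw [harmonic_eq_sum_Icc]; push_cast; rfl
  rw [hh]
  exact harmonic_le_one_add_log n

lemma sg_le_log (n : ℕ) : sg n ≤ ENNReal.ofReal (1 + Real.log n) :=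
  (Finset.sum_le_sum_of_subset (divisors_subset_Icc n)).trans (Icc_inv_le n)

lemma div_gcd_dvd (a b h : ℕ) (hh : h ≠ 0) (hd : h ∣ a * b) : h / Nat.gcd h a ∣ b := by
  have hg : 0 < Nat.gcd h a := Nat.gcd_pos_of_pos_left _ (Nat.pos_of_ne_zero hh)
  have h1 : h / Nat.gcd h a ∣ (a / Nat.gcd h a) * b := by
    have h2 : Nat.gcd h a * (h / Nat.gcd h a) ∣ Nat.gcd h a * ((a / Nat.gcd h a) * b) := by
      rw [← Nat.mul_assoc, Nat.mul_div_cancel' (Nat.gcd_dvd_right h a),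
        Nat.mul_div_cancel' (Nat.gcd_dvd_left h a)]
      exact hd
    exact (Nat.mul_dvd_mul_iff_left hg).mp h2
  exact (Nat.coprime_div_gcd_div_gcd hg).dvd_of_dvd_mul_left h1

lemma sg_submul (a b : ℕ) (ha : a ≠ 0) (hb : b ≠ 0) : sg (a * b) ≤ sg a * sg b := by
  rw [sg, sg, sg, Finset.sum_mul_sum, ← Finset.sum_product']
  set φ : ℕ → ℕ × ℕ := fun h => (Nat.gcd h a, h / Nat.gcd h a) with hφ
  have hrec : ∀ h ∈ (a * b).divisors, Nat.gcd h a * (h / Nat.gcd h a) = h := fun h _ =>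
    Nat.mul_div_cancel' (Nat.gcd_dvd_left h a)
  have hinj : ∀ x ∈ (a * b).divisors, ∀ y ∈ (a * b).divisors, φ x = φ y → x = y := by
    intro x hx y hy hxy
    have h1 := hrec x hx; have h2 := hrec y hy
    simp only [hφ, Prod.mk.injEq] at hxy
    rw [← h1, ← h2, hxy.2, hxy.1]
  have heq : ∑ h ∈ (a * b).divisors, ((h : ℝ≥0∞))⁻¹
      = ∑ p ∈ (a * b).divisors.image φ, (((p.1 * p.2 : ℕ) : ℝ≥0∞))⁻¹ := by
    rw [Finset.sum_image hinj]
    exact Finset.sum_congr rfl fun h hh => by rw [hφ]; simp only [hrec h hh]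
  rw [heq]
  have hsub : (a * b).divisors.image φ ⊆ a.divisors ×ˢ b.divisors := by
    intro p hp
    rw [Finset.mem_image] at hp
    obtain ⟨h, hh, rfl⟩ := hp
    rw [Nat.mem_divisors] at hh
    have hh0 : h ≠ 0 := fun h0 => by
      subst h0; exact absurd (zero_dvd_iff.mp hh.1) (Nat.mul_ne_zero ha hb)
    rw [Finset.mem_product]
    exact ⟨Nat.mem_divisors.mpr ⟨Nat.gcd_dvd_right h a, ha⟩,
      Nat.mem_divisors.mpr ⟨div_gcd_dvd a b h hh0 hh.1, hb⟩⟩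
  calc ∑ p ∈ (a * b).divisors.image φ, (((p.1 * p.2 : ℕ) : ℝ≥0∞))⁻¹
      ≤ ∑ p ∈ a.divisors ×ˢ b.divisors, (((p.1 * p.2 : ℕ) : ℝ≥0∞))⁻¹ :=
        Finset.sum_le_sum_of_subset hsub
    _ ≤ ∑ p ∈ a.divisors ×ˢ b.divisors, ((p.1 : ℝ≥0∞))⁻¹ * ((p.2 : ℝ≥0∞))⁻¹ := by
        refine Finset.sum_le_sum fun p hp => le_of_eq ?_
        rw [Finset.mem_product, Nat.mem_divisors, Nat.mem_divisors] at hp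
        have h1 : (p.1 : ℝ≥0∞) ≠ 0 := by
          simp only [ne_eq, Nat.cast_eq_zero]
          intro h0
          rw [h0] at hp
          exact ha (zero_dvd_iff.mp hp.1.1)
        rw [Nat.cast_mul, ENNReal.mul_inv (Or.inl h1) (Or.inl (ENNReal.natCast_ne_top _))]

lemma sum_sg_div_le (n : ℕ) (hn : n ≠ 0) :
    ∑ e ∈ n.divisors, sg e * ((e : ℝ≥0∞))⁻¹ ≤ z * ENNReal.ofReal (1 + Real.log n) := by
  classical
  set A := n.divisors.sigma (fun e => e.divisors) with hA
  have lhs_eq : ∑ e ∈ n.divisors, sg e * ((e : ℝ≥0∞))⁻¹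
      = ∑ p ∈ A, ((p.2 : ℝ≥0∞))⁻¹ * ((p.1 : ℝ≥0∞))⁻¹ := by
    rw [hA, Finset.sum_sigma]
    exact Finset.sum_congr rfl fun e _ => by rw [sg, Finset.sum_mul]
  have hmem : ∀ p ∈ A, p.2 ∣ p.1 ∧ p.1 ∣ n ∧ p.1 ≠ 0 ∧ p.2 ≠ 0 := by
    intro p hp
    rw [hA, Finset.mem_sigma, Nat.mem_divisors, Nat.mem_divisors] at hp
    exact ⟨hp.2.1, hp.1.1, hp.2.2,
      fun h0 => hp.2.2 (Nat.eq_zero_of_zero_dvd (h0 ▸ hp.2.1))⟩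
  set φ : (Σ _e : ℕ, ℕ) → ℕ × ℕ := fun p => (p.2, p.1 / p.2) with hφ
  set G : ℕ × ℕ → ℝ≥0∞ := fun q => ((q.1 : ℝ≥0∞))⁻¹ ^ 2 * ((q.2 : ℝ≥0∞))⁻¹ with hG
  have hinj : ∀ x ∈ A, ∀ y ∈ A, φ x = φ y → x = y := by
    intro x hx y hy hxy
    obtain ⟨hx1, -, -, -⟩ := hmem _ hx
    obtain ⟨hy1, -, -, -⟩ := hmem _ hy
    simp only [hφ, Prod.mk.injEq] at hxy
    have he : x.1 = y.1 := by
      rw [← Nat.mul_div_cancel' hx1, ← Nat.mul_div_cancel' hy1, hxy.2, hxy.1]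
    exact Sigma.ext he (heq_of_eq hxy.1)
  have step1 : ∑ p ∈ A, ((p.2 : ℝ≥0∞))⁻¹ * ((p.1 : ℝ≥0∞))⁻¹ = ∑ q ∈ A.image φ, G q := by
    rw [Finset.sum_image hinj]
    refine Finset.sum_congr rfl fun p hp => ?_
    obtain ⟨h1, -, -, h4⟩ := hmem p hp
    have hp1 : (p.1 : ℝ≥0∞) = (p.2 : ℝ≥0∞) * ((p.1 / p.2 : ℕ) : ℝ≥0∞) := by
      rw [← Nat.cast_mul, Nat.mul_div_cancel' h1]
    have h2ne : (p.2 : ℝ≥0∞) ≠ 0 := by simp [h4]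
    simp only [hG, hφ]
    rw [hp1, ENNReal.mul_inv (Or.inl h2ne) (Or.inl (ENNReal.natCast_ne_top _)), pow_two]
    ring
  have himg : A.image φ ⊆ n.divisors ×ˢ Finset.Icc 1 n := by
    intro q hq
    rw [Finset.mem_image] at hq
    obtain ⟨p, hp, rfl⟩ := hq
    obtain ⟨h1, h2, h3, h4⟩ := hmem p hp
    rw [Finset.mem_product, Nat.mem_divisors, Finset.mem_Icc]
    refine ⟨⟨h1.trans h2, hn⟩, ?_, ?_⟩
    · exact Nat.div_pos (Nat.le_of_dvd (Nat.pos_of_ne_zero h3) h1) (Nat.pos_of_ne_zero h4)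
    · exact (Nat.div_le_self _ _).trans (Nat.le_of_dvd (Nat.pos_of_ne_zero hn) h2)
  calc ∑ e ∈ n.divisors, sg e * ((e : ℝ≥0∞))⁻¹ = ∑ q ∈ A.image φ, G q := by
        rw [lhs_eq, step1]
    _ ≤ ∑ q ∈ n.divisors ×ˢ Finset.Icc 1 n, G q := Finset.sum_le_sum_of_subset himg
    _ = (∑ f ∈ n.divisors, ((f : ℝ≥0∞))⁻¹ ^ 2) * (∑ g ∈ Finset.Icc 1 n, ((g : ℝ≥0∞))⁻¹) := by
        rw [Finset.sum_mul_sum, ← Finset.sum_product']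
    _ ≤ z * ENNReal.ofReal (1 + Real.log n) := mul_le_mul' (div_inv_sq_le_z n) (Icc_inv_le n)

noncomputable def B : ℝ≥0∞ := ∑' m : ℕ, sg (m + 1) * (((m + 1 : ℕ)) : ℝ≥0∞)⁻¹ ^ 2

lemma summable_logterm :
    Summable (fun m : ℕ => (1 + Real.log ((m + 1 : ℕ) : ℝ)) / ((m + 1 : ℕ) : ℝ) ^ 2) := by
  have h32 : Summable (fun m : ℕ => 3 * (1 / ((m + 1 : ℕ) : ℝ) ^ ((3 : ℝ) / 2))) := by
    have h := Real.summable_one_div_nat_rpow.mpr (show (1:ℝ) < 3 / 2 by norm_num)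
    exact ((summable_nat_add_iff (f := fun n : ℕ => 1 / (n : ℝ) ^ ((3:ℝ)/2)) 1).mpr h).mul_left 3
  refine Summable.of_nonneg_of_le (fun m => by positivity) (fun m => ?_) h32
  set x : ℝ := ((m + 1 : ℕ) : ℝ) with hx
  have hx1 : (1 : ℝ) ≤ x := by rw [hx]; exact_mod_cast Nat.succ_le_succ (Nat.zero_le m)
  have hxpos : (0 : ℝ) < x := by linarith
  have hsq1 : (1 : ℝ) ≤ Real.sqrt x := Real.one_le_sqrt.mpr hx1
  have hlog : Real.log x ≤ 2 * Real.sqrt x := by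
    have h := Real.log_le_sub_one_of_pos (show (0:ℝ) < Real.sqrt x by positivity)
    rw [Real.log_sqrt hxpos.le] at h
    nlinarith [Real.sqrt_nonneg x]
  have hnum : 1 + Real.log x ≤ 3 * Real.sqrt x := by nlinarith
  have key : Real.sqrt x * x ^ ((3 : ℝ) / 2) = x ^ 2 := by
    rw [Real.sqrt_eq_rpow, ← Real.rpow_natCast x 2, ← Real.rpow_add hxpos]
    norm_num
  rw [mul_one_div, div_le_div_iff₀ (by positivity) (by positivity)]
  calc (1 + Real.log x) * x ^ ((3:ℝ)/2) ≤ (3 * Real.sqrt x) * x ^ ((3:ℝ)/2) :=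
        mul_le_mul_of_nonneg_right hnum (by positivity)
    _ = 3 * x ^ 2 := by rw [mul_assoc, key]

lemma B_le : B ≤ ENNReal.ofReal
    (∑' m : ℕ, (1 + Real.log ((m + 1 : ℕ) : ℝ)) / ((m + 1 : ℕ) : ℝ) ^ 2) := by
  rw [ENNReal.ofReal_tsum_of_nonneg (fun m => ?pos) summable_logterm]
  case pos =>
    have : (0:ℝ) ≤ Real.log ((m + 1 : ℕ) : ℝ) :=
      Real.log_nonneg (by exact_mod_cast Nat.succ_le_succ (Nat.zero_le m))
    positivity
  refine ENNReal.tsum_le_tsum fun m => ?_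
  have h1 : sg (m + 1) ≤ ENNReal.ofReal (1 + Real.log ((m + 1 : ℕ) : ℝ)) := sg_le_log (m + 1)
  calc sg (m + 1) * (((m + 1 : ℕ)) : ℝ≥0∞)⁻¹ ^ 2
      ≤ ENNReal.ofReal (1 + Real.log ((m + 1 : ℕ) : ℝ)) * ENNReal.ofReal (1 / ((m+1:ℕ):ℝ) ^ 2) := by
        rw [ofReal_inv_nat_sq (m + 1) (Nat.succ_ne_zero m)]
        exact mul_le_mul' h1 le_rfl
    _ = ENNReal.ofReal ((1 + Real.log ((m + 1 : ℕ) : ℝ)) * (1 / ((m+1:ℕ):ℝ) ^ 2)) := by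
        rw [ENNReal.ofReal_mul ?nn]
        case nn =>
          have : (0:ℝ) ≤ Real.log ((m + 1 : ℕ) : ℝ) :=
            Real.log_nonneg (by exact_mod_cast Nat.succ_le_succ (Nat.zero_le m))
          positivity
    _ = ENNReal.ofReal ((1 + Real.log ((m + 1 : ℕ) : ℝ)) / ((m+1:ℕ):ℝ) ^ 2) := by
        rw [mul_one_div]

lemma B_ne_top : B ≠ ⊤ := ne_top_of_le_ne_top ENNReal.ofReal_ne_top B_le

lemma gcd_le_divsum (a n : ℕ) (hn : n ≠ 0) :
    ((Nat.gcd a n : ℕ) : ℝ≥0∞) ≤ ∑ e ∈ n.divisors, (if e ∣ a then (e : ℝ≥0∞) else 0) := by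
  classical
  have hmem : Nat.gcd a n ∈ n.divisors := Nat.mem_divisors.mpr ⟨Nat.gcd_dvd_right a n, hn⟩
  have h := Finset.single_le_sum (f := fun e : ℕ => if e ∣ a then (e : ℝ≥0∞) else 0)
    (fun i _ => zero_le) hmem
  simpa [Nat.gcd_dvd_left a n] using h

lemma cast_mul_inv_sq (e m : ℕ) (he : e ≠ 0) :
    (e : ℝ≥0∞) * (((e * (m + 1) : ℕ)) : ℝ≥0∞)⁻¹ ^ 2
      = (e : ℝ≥0∞)⁻¹ * (((m + 1 : ℕ)) : ℝ≥0∞)⁻¹ ^ 2 := by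
  have hcast : ((e : ℝ≥0∞)) ≠ 0 := by simp [he]
  rw [Nat.cast_mul, ENNReal.mul_inv (Or.inl hcast) (Or.inl (ENNReal.natCast_ne_top _)), mul_pow]
  rw [show (e : ℝ≥0∞) * ((e : ℝ≥0∞)⁻¹ ^ 2 * (((m + 1 : ℕ)) : ℝ≥0∞)⁻¹ ^ 2)
      = ((e : ℝ≥0∞) * (e : ℝ≥0∞)⁻¹) * ((e : ℝ≥0∞)⁻¹ * (((m + 1 : ℕ)) : ℝ≥0∞)⁻¹ ^ 2) from by ring]
  rw [ENNReal.mul_inv_cancel hcast (ENNReal.natCast_ne_top _), one_mul]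

lemma gcd_le_divsum' (a n : ℕ) (hn : n ≠ 0) :
    ((Nat.gcd n a : ℕ) : ℝ≥0∞) ≤ ∑ e ∈ n.divisors, (if e ∣ a then (e : ℝ≥0∞) else 0) := by
  rw [Nat.gcd_comm]; exact gcd_le_divsum a n hn

lemma inner_tsum_eq (e : ℕ) (he : e ≠ 0) :
    ∑' m : ℕ, (e : ℝ≥0∞) * (((e * (m + 1) : ℕ)) : ℝ≥0∞)⁻¹ ^ 2 = (e : ℝ≥0∞)⁻¹ * z := by
  rw [tsum_congr (fun m => cast_mul_inv_sq e m he), ENNReal.tsum_mul_left]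
  rfl

lemma cc_ofReal_le (n : ℕ) (hn : n ≠ 0) : ENNReal.ofReal (cc n) ≤ z * sg n := by
  classical
  have step1 : ENNReal.ofReal (cc n)
      ≤ ∑' d : ℕ, ((Nat.gcd (d + 1) n : ℕ) : ℝ≥0∞) * (((d + 1 : ℕ)) : ℝ≥0∞)⁻¹ ^ 2 := by
    rw [cc]
    by_cases hsum : Summable (fun d : ℕ => (Nat.gcd (d + 1) n : ℝ) / ((d + 1 : ℕ) ^ 2))
    · rw [ENNReal.ofReal_tsum_of_nonneg (fun d => by positivity) hsum]
      refine ENNReal.tsum_le_tsum fun d => le_of_eq ?_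
      rw [div_eq_mul_one_div, ENNReal.ofReal_mul (by positivity), ENNReal.ofReal_natCast,
        ofReal_inv_nat_sq (d + 1) (Nat.succ_ne_zero d)]
    · rw [tsum_eq_zero_of_not_summable hsum]
      simp
  refine step1.trans ?_
  have step2 : ∀ d : ℕ, ((Nat.gcd (d + 1) n : ℕ) : ℝ≥0∞) * (((d + 1 : ℕ)) : ℝ≥0∞)⁻¹ ^ 2
      ≤ ∑ e ∈ n.divisors, (if e ∣ d + 1 then (e : ℝ≥0∞) * (((d + 1 : ℕ)) : ℝ≥0∞)⁻¹ ^ 2 else 0) := by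
    intro d
    calc ((Nat.gcd (d + 1) n : ℕ) : ℝ≥0∞) * (((d + 1 : ℕ)) : ℝ≥0∞)⁻¹ ^ 2
        ≤ (∑ e ∈ n.divisors, (if e ∣ d + 1 then (e : ℝ≥0∞) else 0)) * (((d + 1 : ℕ)) : ℝ≥0∞)⁻¹ ^ 2 :=
          mul_le_mul_left (gcd_le_divsum (d + 1) n hn) _
      _ = _ := by
          rw [Finset.sum_mul]
          exact Finset.sum_congr rfl fun e _ => by rw [ite_mul, zero_mul]
  calc ∑' d : ℕ, ((Nat.gcd (d + 1) n : ℕ) : ℝ≥0∞) * (((d + 1 : ℕ)) : ℝ≥0∞)⁻¹ ^ 2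
      ≤ ∑' d : ℕ, ∑ e ∈ n.divisors,
          (if e ∣ d + 1 then (e : ℝ≥0∞) * (((d + 1 : ℕ)) : ℝ≥0∞)⁻¹ ^ 2 else 0) :=
        ENNReal.tsum_le_tsum step2
    _ = ∑ e ∈ n.divisors, ∑' d : ℕ,
          (if e ∣ d + 1 then (e : ℝ≥0∞) * (((d + 1 : ℕ)) : ℝ≥0∞)⁻¹ ^ 2 else 0) :=
        Summable.tsum_finsetSum fun i _ => ENNReal.summable
    _ = ∑ e ∈ n.divisors, (e : ℝ≥0∞)⁻¹ * z := by
        refine Finset.sum_congr rfl fun e he => ?_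
        have he0 : e ≠ 0 := (Nat.pos_of_mem_divisors he).ne'
        rw [tsum_if_dvd e he0 (F := fun x => (e : ℝ≥0∞) * ((x : ℕ) : ℝ≥0∞)⁻¹ ^ 2)]
        exact inner_tsum_eq e he0
    _ = z * sg n := by rw [← Finset.sum_mul, mul_comm, sg]

lemma cc_nonneg (n : ℕ) : 0 ≤ cc n := tsum_nonneg fun d => by positivity

set_option maxHeartbeats 2000000 in
lemma main_bound (d1 : ℕ) (hd1 : d1 ≠ 0) :
    (∑' d2 : ℕ, ENNReal.ofReal (cc (d2 + 1)) * ((Nat.gcd d1 (d2 + 1) : ℕ) : ℝ≥0∞)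
        * (((d2 + 1 : ℕ)) : ℝ≥0∞)⁻¹ ^ 2)
      ≤ (z * B * z) * ENNReal.ofReal (1 + Real.log d1) := by
  classical
  calc ∑' d2 : ℕ, ENNReal.ofReal (cc (d2 + 1)) * ((Nat.gcd d1 (d2 + 1) : ℕ) : ℝ≥0∞)
        * (((d2 + 1 : ℕ)) : ℝ≥0∞)⁻¹ ^ 2
      ≤ ∑' d2 : ℕ, z * (sg (d2 + 1) * ((Nat.gcd d1 (d2 + 1) : ℕ) : ℝ≥0∞)
          * (((d2 + 1 : ℕ)) : ℝ≥0∞)⁻¹ ^ 2) := by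
        refine ENNReal.tsum_le_tsum fun d2 => ?_
        calc ENNReal.ofReal (cc (d2 + 1)) * ((Nat.gcd d1 (d2 + 1) : ℕ) : ℝ≥0∞)
              * (((d2 + 1 : ℕ)) : ℝ≥0∞)⁻¹ ^ 2
            ≤ (z * sg (d2 + 1)) * ((Nat.gcd d1 (d2 + 1) : ℕ) : ℝ≥0∞)
              * (((d2 + 1 : ℕ)) : ℝ≥0∞)⁻¹ ^ 2 :=
              mul_le_mul_left (mul_le_mul_left
                (cc_ofReal_le (d2 + 1) (Nat.succ_ne_zero d2)) _) _
          _ = z * (sg (d2 + 1) * ((Nat.gcd d1 (d2 + 1) : ℕ) : ℝ≥0∞)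
              * (((d2 + 1 : ℕ)) : ℝ≥0∞)⁻¹ ^ 2) := by ring
    _ = z * ∑' d2 : ℕ, (sg (d2 + 1) * ((Nat.gcd d1 (d2 + 1) : ℕ) : ℝ≥0∞)
          * (((d2 + 1 : ℕ)) : ℝ≥0∞)⁻¹ ^ 2) := ENNReal.tsum_mul_left
    _ ≤ z * ∑' d2 : ℕ, ∑ e ∈ d1.divisors,
          (if e ∣ d2 + 1 then sg (d2 + 1) * (e : ℝ≥0∞) * (((d2 + 1 : ℕ)) : ℝ≥0∞)⁻¹ ^ 2 else 0) := by
        refine mul_le_mul_right (ENNReal.tsum_le_tsum fun d2 => ?_) _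
        calc sg (d2 + 1) * ((Nat.gcd d1 (d2 + 1) : ℕ) : ℝ≥0∞) * (((d2 + 1 : ℕ)) : ℝ≥0∞)⁻¹ ^ 2
            ≤ sg (d2 + 1) * (∑ e ∈ d1.divisors, (if e ∣ d2 + 1 then (e : ℝ≥0∞) else 0))
              * (((d2 + 1 : ℕ)) : ℝ≥0∞)⁻¹ ^ 2 :=
              mul_le_mul_left (mul_le_mul_right (gcd_le_divsum' (d2 + 1) d1 hd1) _) _
          _ = _ := by
              rw [Finset.mul_sum, Finset.sum_mul]
              exact Finset.sum_congr rfl fun e _ => by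
                rw [mul_ite, mul_zero, ite_mul, zero_mul]
    _ = z * ∑ e ∈ d1.divisors, ∑' d2 : ℕ,
          (if e ∣ d2 + 1 then sg (d2 + 1) * (e : ℝ≥0∞) * (((d2 + 1 : ℕ)) : ℝ≥0∞)⁻¹ ^ 2 else 0) := by
        rw [Summable.tsum_finsetSum fun i _ => ENNReal.summable]
    _ ≤ z * ∑ e ∈ d1.divisors, sg e * (e : ℝ≥0∞)⁻¹ * B := by
        refine mul_le_mul_right (Finset.sum_le_sum fun e he => ?_) _
        have he0 : e ≠ 0 := (Nat.pos_of_mem_divisors he).ne'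
        rw [tsum_if_dvd e he0 (F := fun x => sg x * (e : ℝ≥0∞) * ((x : ℕ) : ℝ≥0∞)⁻¹ ^ 2)]
        calc ∑' m : ℕ, sg (e * (m + 1)) * (e : ℝ≥0∞) * (((e * (m + 1) : ℕ)) : ℝ≥0∞)⁻¹ ^ 2
            ≤ ∑' m : ℕ, (sg e * (e : ℝ≥0∞)⁻¹) * (sg (m + 1) * (((m + 1 : ℕ)) : ℝ≥0∞)⁻¹ ^ 2) := by
              refine ENNReal.tsum_le_tsum fun m => ?_
              rw [mul_assoc, cast_mul_inv_sq e m he0]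
              calc sg (e * (m + 1)) * ((e : ℝ≥0∞)⁻¹ * (((m + 1 : ℕ)) : ℝ≥0∞)⁻¹ ^ 2)
                  ≤ (sg e * sg (m + 1)) * ((e : ℝ≥0∞)⁻¹ * (((m + 1 : ℕ)) : ℝ≥0∞)⁻¹ ^ 2) :=
                    mul_le_mul_left (sg_submul e (m + 1) he0 (Nat.succ_ne_zero m)) _
                _ = (sg e * (e : ℝ≥0∞)⁻¹) * (sg (m + 1) * (((m + 1 : ℕ)) : ℝ≥0∞)⁻¹ ^ 2) := by
                    ring
          _ = sg e * (e : ℝ≥0∞)⁻¹ * B := by rw [ENNReal.tsum_mul_left]; rfl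
    _ = z * ((∑ e ∈ d1.divisors, sg e * (e : ℝ≥0∞)⁻¹) * B) := by rw [← Finset.sum_mul]
    _ ≤ z * ((z * ENNReal.ofReal (1 + Real.log d1)) * B) :=
        mul_le_mul_right (mul_le_mul_left (sum_sg_div_le d1 hd1) _) _
    _ = (z * B * z) * ENNReal.ofReal (1 + Real.log d1) := by ring

end CCAux

/-- `∑_{d₂=1}^{∞} c_{d₂}·gcd(d₁,d₂)/d₂² = O(1 + log d₁)` uniformly in `d₁`. -/
theorem sum_cc_gcd_le : ∃ C : ℝ, 0 < C ∧ ∀ d1 : ℕ, 1 ≤ d1 →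
    (∑' d2 : ℕ, cc (d2 + 1) * (Nat.gcd d1 (d2 + 1) : ℝ) / ((d2 + 1 : ℕ) ^ 2))
      ≤ C * (1 + Real.log d1) := by
  classical
  open CCAux in
  set C0 : ℝ := (z * B * z).toReal with hC0
  refine ⟨max 1 C0, lt_of_lt_of_le one_pos (le_max_left _ _), fun d1 hd1 => ?_⟩
  have hd1' : d1 ≠ 0 := by omega
  have hlog : (0:ℝ) ≤ Real.log d1 := Real.log_nonneg (by exact_mod_cast hd1)
  have htop : z * B * z ≠ ⊤ :=
    ENNReal.mul_ne_top (ENNReal.mul_ne_top z_ne_top B_ne_top) z_ne_top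
  have hfin : ∀ d2 : ℕ,
      ENNReal.ofReal (cc (d2 + 1) * (Nat.gcd d1 (d2 + 1) : ℝ) / ((d2 + 1 : ℕ) ^ 2))
        = ENNReal.ofReal (cc (d2 + 1)) * ((Nat.gcd d1 (d2 + 1) : ℕ) : ℝ≥0∞)
          * (((d2 + 1 : ℕ)) : ℝ≥0∞)⁻¹ ^ 2 := by
    intro d2
    rw [div_eq_mul_one_div,
      ENNReal.ofReal_mul (mul_nonneg (cc_nonneg _) (Nat.cast_nonneg _)),
      ENNReal.ofReal_mul (cc_nonneg _), ENNReal.ofReal_natCast,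
      ofReal_inv_nat_sq (d2 + 1) (Nat.succ_ne_zero d2)]
  have hRHS : (z * B * z) * ENNReal.ofReal (1 + Real.log d1)
      ≤ ENNReal.ofReal (C0 * (1 + Real.log d1)) := by
    rw [ENNReal.ofReal_mul ENNReal.toReal_nonneg]
    exact mul_le_mul_left (le_of_eq (ENNReal.ofReal_toReal htop).symm) _
  have hCnn : (0:ℝ) ≤ C0 * (1 + Real.log d1) :=
    mul_nonneg ENNReal.toReal_nonneg (by linarith)
  have hmono : C0 * (1 + Real.log d1) ≤ max 1 C0 * (1 + Real.log d1) :=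
    mul_le_mul_of_nonneg_right (le_max_right 1 C0) (by linarith)
  by_cases hsum : Summable (fun d2 : ℕ =>
      cc (d2 + 1) * (Nat.gcd d1 (d2 + 1) : ℝ) / ((d2 + 1 : ℕ) ^ 2))
  · have hf0 : ∀ d2 : ℕ,
        0 ≤ cc (d2 + 1) * (Nat.gcd d1 (d2 + 1) : ℝ) / ((d2 + 1 : ℕ) ^ 2) := fun d2 =>
      div_nonneg (mul_nonneg (cc_nonneg _) (Nat.cast_nonneg _)) (by positivity)
    have h1 : ENNReal.ofReal
        (∑' d2 : ℕ, cc (d2 + 1) * (Nat.gcd d1 (d2 + 1) : ℝ) / ((d2 + 1 : ℕ) ^ 2))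
        ≤ ENNReal.ofReal (C0 * (1 + Real.log d1)) := by
      rw [ENNReal.ofReal_tsum_of_nonneg hf0 hsum, tsum_congr hfin]
      exact (main_bound d1 hd1').trans hRHS
    exact ((ENNReal.ofReal_le_ofReal_iff hCnn).mp h1).trans hmono
  · rw [tsum_eq_zero_of_not_summable hsum]
    have : (0:ℝ) ≤ max 1 C0 * (1 + Real.log d1) :=
      mul_nonneg (le_trans zero_le_one (le_max_left _ _)) (by linarith)
    exact this
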